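/- Let φ ∈ (0,1), ω = e^{2πiφ}, α ∈ ℂ with α ≠ 0, β = iα, and λ ∈ ℂ with λ ≠ 0. If (√2/(λα))·((−λ² + ω/2)α − (ω/2)β) = ω(α−β)/(√2 λ((ω−1)α − ωβ)), then λ² = ω[(1−2ω+ω²) − i(1−ω+ω²)]/(1−2ω+2ω²). (The denominators (ω−1)α−ωβ and 1−2ω+2ω² are automatically nonzero since |ω| = 1.) -/

import Mathlib

theorem wojcik_lambda_sq_beta_eq_i_alpha
    (φ : ℝ) (hφ : φ ∈ Set.Ioo (0 : ℝ) 1) (ω α β lam : ℂ)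
    (hω : ω = Complex.exp (2 * (Real.pi : ℂ) * Complex.I * (φ : ℂ)))
    (hα : α ≠ 0) (hβ : β = Complex.I * α) (hlam : lam ≠ 0)
    (h : (Real.sqrt 2 : ℂ) / (lam * α) * ((-lam ^ 2 + ω / 2) * α - ω / 2 * β) =
         ω * (α - β) / ((Real.sqrt 2 : ℂ) * lam * ((ω - 1) * α - ω * β))) :
    lam ^ 2 =
      ω * ((1 - 2 * ω + ω ^ 2) - Complex.I * (1 - ω + ω ^ 2)) / (1 - 2 * ω + 2 * ω ^ 2) := by
  have habs : ‖ω‖ = 1 := by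
    rw [hω]
    have : (2 * (Real.pi : ℂ) * Complex.I * (φ : ℂ)) = ((2 * Real.pi * φ : ℝ) : ℂ) * Complex.I := by
      push_cast; ring
    rw [this, Complex.norm_exp_ofReal_mul_I]
  have key : ∀ c : ℂ, ‖c‖ = Real.sqrt 2 → ω * c ≠ 1 := by
    intro c hc hcon
    have h2 := congrArg (‖·‖) hcon
    rw [norm_mul, habs, hc, norm_one, one_mul] at h2
    have h3 : (2:ℝ) = 1 := by
      have := congrArg (· ^ 2) h2
      simpa [Real.sq_sqrt] using this
    norm_num at h3
  have h1 : (ω - 1) - ω * Complex.I ≠ 0 := by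
    intro hc
    refine key (1 - Complex.I) ?_ (by linear_combination hc)
    simp [Complex.norm_def, Complex.normSq_apply]
    norm_num
  have h2 : (ω - 1) + ω * Complex.I ≠ 0 := by
    intro hc
    refine key (1 + Complex.I) ?_ (by linear_combination hc)
    simp [Complex.norm_def, Complex.normSq_apply]
    norm_num
  have hd : (1 : ℂ) - 2 * ω + 2 * ω ^ 2 ≠ 0 := by
    intro hc
    rcases mul_eq_zero.1 (show ((ω - 1) - ω * Complex.I) * ((ω - 1) + ω * Complex.I) = 0 by
      linear_combination hc + (-ω^2) * Complex.I_sq) with h'|h'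
    · exact h1 h'
    · exact h2 h'
  subst hβ
  have hs : ((Real.sqrt 2 : ℝ):ℂ) ≠ 0 := by norm_cast; positivity
  have hs2 : ((Real.sqrt 2 : ℝ):ℂ)^2 = 2 := by
    norm_cast; exact Real.sq_sqrt (by norm_num)
  have hden : (ω - 1) * α - ω * (Complex.I * α) ≠ 0 := by
    intro hc; apply h1
    rcases mul_eq_zero.1 (show α * ((ω - 1) - ω * Complex.I) = 0 by linear_combination hc) with h'|h'
    · exact absurd h' hα
    · exact h'
  field_simp at h
  have hne : (2:ℂ) * lam * α ^ 2 ≠ 0 := by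
    apply mul_ne_zero (mul_ne_zero (by norm_num) hlam) (pow_ne_zero 2 hα)
  have hkey : (-(lam ^ 2 * 2) + ω - ω * Complex.I) * ((ω - 1) - ω * Complex.I)
      = ω * (1 - Complex.I) := by
    apply mul_left_cancel₀ hne
    linear_combination (lam * α ^ 2) * h +
      (-(lam * α ^ 2 * ((-(lam ^ 2 * 2) + ω - ω * Complex.I) * ((ω - 1) - ω * Complex.I)))) * hs2
  rw [eq_div_iff hd]
  linear_combination (-((ω - 1) + ω * Complex.I) / 2) * hkey +
    (lam ^ 2 * ω ^ 2 + (ω ^ 2 - ω ^ 3) / 2 + ω ^ 3 / 2 * Complex.I) * Complex.I_sq
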